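/- The function n ↦ EIP^d(n) is nondecreasing on ℕ: for m ≤ n, EIP^d(m) ≤ EIP^d(n). -/

import Mathlib

/-- Two points of `ℤ^d` are adjacent (nearest neighbors) if their Euclidean
distance is 1, i.e. `∑ i (x i - y i)^2 = 1`. -/
def adj {d : ℕ} (x y : Fin d → ℤ) : Prop := (∑ i, (x i - y i) ^ 2) = 1

/-- The edge boundary `Θ_d(C)`. -/
def edgeBoundary {d : ℕ} (C : Set (Fin d → ℤ)) : Set ((Fin d → ℤ) × (Fin d → ℤ)) :=
  {p | p.1 ∈ C ∧ p.2 ∉ C ∧ adj p.1 p.2}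

/-- The edge perimeter `#Θ_d(C)`. -/
noncomputable def thetaCard {d : ℕ} (C : Set (Fin d → ℤ)) : ℕ := (edgeBoundary C).ncard

/-- The set of ordered bonded pairs in `C`; its cardinality is `2·b(C)`
where `b(C)` is the number of bonds. -/
def bondPairs {d : ℕ} (C : Set (Fin d → ℤ)) : Set ((Fin d → ℤ) × (Fin d → ℤ)) :=
  {p | p.1 ∈ C ∧ p.2 ∈ C ∧ adj p.1 p.2}

/-- `2·b(C)`, twice the number of bonds of `C`. -/
noncomputable def bondsTwice {d : ℕ} (C : Set (Fin d → ℤ)) : ℕ := (bondPairs C).ncard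

/-- The minimal edge perimeter among subsets of `ℤ^d` of cardinality `n`. -/
noncomputable def EIP (d n : ℕ) : ℕ :=
  sInf {m | ∃ C : Set (Fin d → ℤ), C.Finite ∧ C.ncard = n ∧ thetaCard C = m}

/-- If `a` is adjacent to `b`, then `b` differs from `a` in exactly one
coordinate, by `±1`. -/
lemma adj_elim {d : ℕ} {a b : Fin d → ℤ} (h : adj a b) :
    ∃ j, (b j = a j + 1 ∨ b j = a j - 1) ∧ ∀ i, i ≠ j → b i = a i := by
  unfold adj at h
  have hex : ∃ j, a j - b j ≠ 0 := by
    by_contra h0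
    push_neg at h0
    have hz : ∑ i, (a i - b i) ^ 2 = 0 :=
      Finset.sum_eq_zero (fun i _ => by rw [h0 i]; ring)
    omega
  obtain ⟨j, hj⟩ := hex
  have h1 : (a j - b j) ^ 2 + ∑ i ∈ Finset.univ.erase j, (a i - b i) ^ 2 = 1 :=
    (Finset.add_sum_erase Finset.univ (fun i => (a i - b i) ^ 2) (Finset.mem_univ j)).trans h
  have hsq : 1 ≤ (a j - b j) ^ 2 := by
    rcases lt_or_gt_of_ne hj with h' | h' <;> nlinarith
  have hnn : 0 ≤ ∑ i ∈ Finset.univ.erase j, (a i - b i) ^ 2 :=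
    Finset.sum_nonneg (fun i _ => sq_nonneg _)
  have hrest : ∑ i ∈ Finset.univ.erase j, (a i - b i) ^ 2 = 0 := by omega
  have hterm : (a j - b j) ^ 2 = 1 := by omega
  have hzero : ∀ i ∈ Finset.univ.erase j, (a i - b i) ^ 2 = 0 :=
    (Finset.sum_eq_zero_iff_of_nonneg (fun i _ => sq_nonneg _)).mp hrest
  refine ⟨j, ?_, ?_⟩
  · rw [pow_two] at hterm
    rcases mul_self_eq_one_iff.mp hterm with h' | h'
    · right; omega
    · left; omega
  · intro i hi
    have := sq_eq_zero_iff.mp (hzero i (Finset.mem_erase.mpr ⟨hi, Finset.mem_univ i⟩))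
    omega

/-- The sum of coordinates changes by exactly `±1` along an edge. -/
lemma adj_sum {d : ℕ} {a b : Fin d → ℤ} (h : adj a b) :
    (∑ i, (b i - a i)) = 1 ∨ (∑ i, (b i - a i)) = -1 := by
  obtain ⟨j, hj, hrest⟩ := adj_elim h
  have hz : ∑ i ∈ Finset.univ.erase j, (b i - a i) = 0 :=
    Finset.sum_eq_zero (fun i hi => by rw [hrest i (Finset.mem_erase.mp hi).1]; ring)
  have hs : ∑ i, (b i - a i) = b j - a j := by
    have h' := Finset.add_sum_erase Finset.univ (fun i => b i - a i) (Finset.mem_univ j)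
    simpa [hz] using h'.symm
  rw [hs]; omega

/-- A point has finitely many neighbors. -/
lemma neighbors_finite {d : ℕ} (a : Fin d → ℤ) : {b | adj a b}.Finite := by
  have hsub : {b | adj a b} ⊆ Set.range
      (fun p : Fin d × Bool => Function.update a p.1 (if p.2 then a p.1 + 1 else a p.1 - 1)) := by
    intro b hb
    obtain ⟨j, hj, hrest⟩ := adj_elim hb
    rcases hj with h' | h'
    · refine ⟨(j, true), funext fun i => ?_⟩
      show Function.update a j (a j + 1) i = b i
      by_cases hij : i = j
      · subst hij; simp [h']
      · rw [Function.update_of_ne hij, hrest i hij]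
    · refine ⟨(j, false), funext fun i => ?_⟩
      show Function.update a j (a j - 1) i = b i
      by_cases hij : i = j
      · subst hij; simp [h']
      · rw [Function.update_of_ne hij, hrest i hij]
  exact (Set.finite_range _).subset hsub

/-- The edge boundary of a finite set is finite. -/
lemma theta_finite {d : ℕ} {C : Set (Fin d → ℤ)} (hC : C.Finite) :
    (edgeBoundary C).Finite := by
  have hsub : edgeBoundary C ⊆ ⋃ a ∈ C, {a} ×ˢ {b | adj a b} := by
    rintro ⟨a, b⟩ ⟨ha, hb, hadj⟩
    exact Set.mem_biUnion ha ⟨rfl, hadj⟩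
  exact (hC.biUnion (fun a _ => (Set.finite_singleton a).prod (neighbors_finite a))).subset hsub

/-- From any finite nonempty set one can remove a point without increasing
the edge perimeter. -/
lemma exists_remove {d : ℕ} (C : Set (Fin d → ℤ)) (hC : C.Finite) (hne : C.Nonempty) :
    ∃ x ∈ C, thetaCard (C \ {x}) ≤ thetaCard C := by
  classical
  obtain ⟨x, hxC, hmax⟩ := Set.exists_max_image C (fun y => ∑ i, y i) hC hne
  refine ⟨x, hxC, ?_⟩
  set f : (Fin d → ℤ) × (Fin d → ℤ) → (Fin d → ℤ) × (Fin d → ℤ) :=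
    fun p => if p.2 = x then (x, fun i => 2 * x i - p.1 i) else p with hf
  apply Set.ncard_le_ncard_of_injOn f ?_ ?_ (theta_finite hC)
  · -- maps to
    rintro ⟨a, b⟩ ⟨ha, hb, hadj⟩
    by_cases h2 : b = x
    · have hfp : f (a, b) = (x, fun i => 2 * x i - a i) := by simp [hf, h2]
      rw [hfp]
      rw [h2] at hadj
      refine ⟨hxC, ?_, ?_⟩
      · intro hq
        have hqs := hmax _ hq
        have has := hmax _ ha.1
        have hs := adj_sum hadj
        have e1 : ∑ i, (2 * x i - a i) = 2 * (∑ i, x i) - ∑ i, a i := by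
          rw [Finset.sum_sub_distrib, ← Finset.mul_sum]
        have e2 : ∑ i, (x i - a i) = ∑ i, x i - ∑ i, a i := Finset.sum_sub_distrib _ _
        simp only at hqs has hs e1 e2
        omega
      · show adj x (fun i => 2 * x i - a i)
        unfold adj at hadj ⊢
        calc ∑ i, (x i - (2 * x i - a i)) ^ 2
            = ∑ i, (a i - x i) ^ 2 := Finset.sum_congr rfl (fun i _ => by ring)
          _ = 1 := hadj
    · have hfp : f (a, b) = (a, b) := by simp [hf, h2]
      rw [hfp]
      exact ⟨ha.1, fun hc => hb ⟨hc, h2⟩, hadj⟩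
  · -- injective on
    rintro ⟨a, b⟩ ⟨ha, hb, hadj⟩ ⟨a', b'⟩ ⟨ha', hb', hadj'⟩ hfq
    have haxne : a ≠ x := fun h => ha.2 (by simp [h])
    have haxne' : a' ≠ x := fun h => ha'.2 (by simp [h])
    by_cases h2 : b = x <;> by_cases h2' : b' = x
    · have e1 : f (a, b) = (x, fun i => 2 * x i - a i) := by simp [hf, h2]
      have e2 : f (a', b') = (x, fun i => 2 * x i - a' i) := by simp [hf, h2']
      rw [e1, e2, Prod.mk.injEq] at hfq
      have haa : a = a' := by
        funext i
        have := congrFun hfq.2 i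
        omega
      rw [haa, h2, h2']
    · have e1 : f (a, b) = (x, fun i => 2 * x i - a i) := by simp [hf, h2]
      have e2 : f (a', b') = (a', b') := by simp [hf, h2']
      rw [e1, e2] at hfq
      exact absurd (congrArg Prod.fst hfq).symm haxne'
    · have e1 : f (a, b) = (a, b) := by simp [hf, h2]
      have e2 : f (a', b') = (x, fun i => 2 * x i - a' i) := by simp [hf, h2']
      rw [e1, e2] at hfq
      exact absurd (congrArg Prod.fst hfq) haxne
    · have e1 : f (a, b) = (a, b) := by simp [hf, h2]
      have e2 : f (a', b') = (a', b') := by simp [hf, h2']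
      rw [e1, e2] at hfq
      exact hfq

/-- The defining set of `EIP d n` is nonempty. -/
lemma EIP_set_nonempty (d n : ℕ) (hd : 1 ≤ d) :
    {m | ∃ C : Set (Fin d → ℤ), C.Finite ∧ C.ncard = n ∧ thetaCard C = m}.Nonempty := by
  haveI : Infinite (Fin d → ℤ) :=
    Infinite.of_injective (fun k : ℤ => fun _ => k) (fun a b h => congrFun h ⟨0, hd⟩)
  obtain ⟨C, -, hfin, hcard⟩ :=
    (Set.infinite_univ (α := Fin d → ℤ)).exists_subset_ncard_eq n
  exact ⟨thetaCard C, C, hfin, hcard, rfl⟩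

/-- `n ↦ EIP^d(n)` is nondecreasing. -/
theorem EIP_monotone (d : ℕ) (hd : 1 ≤ d) (m n : ℕ) (hmn : m ≤ n) :
    EIP d m ≤ EIP d n := by
  have key : ∀ k : ℕ, EIP d k ≤ EIP d (k + 1) := by
    intro k
    obtain ⟨C, hfin, hcard, hval⟩ :
        ∃ C : Set (Fin d → ℤ), C.Finite ∧ C.ncard = k + 1 ∧ thetaCard C = EIP d (k + 1) :=
      Nat.sInf_mem (EIP_set_nonempty d (k + 1) hd)
    have hne : C.Nonempty := Set.nonempty_of_ncard_ne_zero (by omega)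
    obtain ⟨x, hx, hle⟩ := exists_remove C hfin hne
    have hcard' : (C \ {x}).ncard = k := by
      rw [Set.ncard_diff_singleton_of_mem hx, hcard]
      omega
    have h1 : EIP d k ≤ thetaCard (C \ {x}) :=
      Nat.sInf_le ⟨C \ {x}, hfin.subset Set.diff_subset, hcard', rfl⟩
    omega
  exact monotone_nat_of_le_succ key hmn
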